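/- (Concavity of the Glauber Dirichlet form in the measure) Let μ = Σ_a ρ(a)μ_a be a mixture on Σ^n, P the Glauber dynamics for μ and P_a that for μ_a. Then for every f: Σ^n → ℝ_{≥0} and every increasing Φ', E_P(f, Φ'(f)) ≥ Σ_a ρ(a)·E_{P_a}(f, Φ'(f)). Equivalently, for each pair x ∼ y differing in one coordinate, μ(x)μ(y)/(μ(x)+μ(y)) ≥ Σ_a ρ(a)·μ_a(x)μ_a(y)/(μ_a(x)+μ_a(y)). -/
import Mathlib


open Finset

lemma h_super (a b c d : ℝ) (ha : 0 ≤ a) (hb : 0 ≤ b) (hc : 0 ≤ c) (hd : 0 ≤ d) :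
    a*b/(a+b) + c*d/(c+d) ≤ (a+c)*(b+d)/((a+c)+(b+d)) := by
  rcases eq_or_lt_of_le (by positivity : (0:ℝ) ≤ a + b) with h1 | h1
  · have ha0 : a = 0 := by linarith
    have hb0 : b = 0 := by linarith
    simp [ha0, hb0]
  rcases eq_or_lt_of_le (by positivity : (0:ℝ) ≤ c + d) with h2 | h2
  · have hc0 : c = 0 := by linarith
    have hd0 : d = 0 := by linarith
    simp [hc0, hd0]
  rw [div_add_div _ _ (ne_of_gt h1) (ne_of_gt h2), div_le_div_iff₀ (by positivity) (by linarith)]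
  nlinarith [sq_nonneg (a*d - b*c), mul_nonneg ha hd, mul_nonneg hb hc]

lemma h_sum {ι : Type*} (s : Finset ι) (A B : ι → ℝ)
    (hA : ∀ i ∈ s, 0 ≤ A i) (hB : ∀ i ∈ s, 0 ≤ B i) :
    ∑ i ∈ s, A i * B i / (A i + B i)
      ≤ (∑ i ∈ s, A i) * (∑ i ∈ s, B i) / ((∑ i ∈ s, A i) + (∑ i ∈ s, B i)) := by
  induction s using Finset.cons_induction with
  | empty => simp
  | cons j s hj ih =>
    simp only [Finset.sum_cons]
    calc A j * B j / (A j + B j) + ∑ i ∈ s, A i * B i / (A i + B i)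
        ≤ A j * B j / (A j + B j)
          + (∑ i ∈ s, A i) * (∑ i ∈ s, B i) / ((∑ i ∈ s, A i) + (∑ i ∈ s, B i)) := by
          gcongr ?_ + ?_
          · exact le_refl _
          · exact ih (fun i hi => hA i (Finset.mem_cons_of_mem hi))
              (fun i hi => hB i (Finset.mem_cons_of_mem hi))
      _ ≤ _ := h_super _ _ _ _ (hA j (Finset.mem_cons_self j s))
          (hB j (Finset.mem_cons_self j s))
          (Finset.sum_nonneg fun i hi => hA i (Finset.mem_cons_of_mem hi))
          (Finset.sum_nonneg fun i hi => hB i (Finset.mem_cons_of_mem hi))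

lemma h_smul (w u v : ℝ) (hw : 0 ≤ w) :
    w * (u * v / (u + v)) = (w*u) * (w*v) / (w*u + w*v) := by
  rcases eq_or_lt_of_le hw with rfl | hw'
  · simp
  rcases eq_or_ne (u + v) 0 with h | h
  · rw [h, ← mul_add, h]; simp
  · rw [← mul_add, show (w*u)*(w*v) = w*(w*(u*v)) by ring,
      mul_div_mul_left _ _ (ne_of_gt hw'), mul_div_assoc, mul_div_assoc, mul_div_assoc]


/-- Dirichlet form of the Glauber dynamics for `ν`, written as a sum over (ordered) pairs
`x ∼ y` differing in exactly one coordinate, with edge weight `ν(x)ν(y)/(ν(x)+ν(y))`. -/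
noncomputable def pairDirichlet {S : Type*} [Fintype S] [DecidableEq S] {n : ℕ}
    (ν : (Fin n → S) → ℝ) (f g : (Fin n → S) → ℝ) : ℝ :=
  (n : ℝ)⁻¹ * ∑ x, ∑ y,
    if ({j | x j ≠ y j} : Finset (Fin n)).card = 1 then
      ν x * ν y / (ν x + ν y) * ((f x - f y) * (g x - g y))
    else 0

/-- **Concavity of the Glauber Dirichlet form in the measure.** Let `μ = Σ_a ρ(a) μ_a` be a
mixture on `Σ^n`. Then for every `f ≥ 0` and every increasing `Φ'`,
`E_P(f, Φ'(f)) ≥ Σ_a ρ(a)·E_{P_a}(f, Φ'(f))`, and for each pair `x ∼ y` differing in one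
coordinate, `μ(x)μ(y)/(μ(x)+μ(y)) ≥ Σ_a ρ(a)·μ_a(x)μ_a(y)/(μ_a(x)+μ_a(y))`. -/
theorem glauber_dirichlet_concave {S : Type*} [Fintype S] [DecidableEq S] {n k : ℕ}
    (ρ : Fin k → ℝ) (hρ0 : ∀ a, 0 ≤ ρ a) (hρ1 : ∑ a, ρ a = 1)
    (νa : Fin k → (Fin n → S) → ℝ) (hνa0 : ∀ a x, 0 ≤ νa a x) (hνa1 : ∀ a, ∑ x, νa a x = 1)
    (dΦ : ℝ → ℝ) (hdΦmono : Monotone dΦ)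
    (f : (Fin n → S) → ℝ) (hf : ∀ x, 0 ≤ f x) :
    (∑ a, ρ a * pairDirichlet (νa a) f (fun x => dΦ (f x)))
      ≤ pairDirichlet (fun x => ∑ a, ρ a * νa a x) f (fun x => dΦ (f x))
    ∧ ∀ x y : Fin n → S, ({j | x j ≠ y j} : Finset (Fin n)).card = 1 →
      ∑ a, ρ a * (νa a x * νa a y / (νa a x + νa a y))
        ≤ (∑ a, ρ a * νa a x) * (∑ a, ρ a * νa a y)
            / ((∑ a, ρ a * νa a x) + (∑ a, ρ a * νa a y)) := by
  have key : ∀ x y : Fin n → S,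
      ∑ a, ρ a * (νa a x * νa a y / (νa a x + νa a y))
        ≤ (∑ a, ρ a * νa a x) * (∑ a, ρ a * νa a y)
            / ((∑ a, ρ a * νa a x) + (∑ a, ρ a * νa a y)) := by
    intro x y
    calc ∑ a, ρ a * (νa a x * νa a y / (νa a x + νa a y))
        = ∑ a, (ρ a * νa a x) * (ρ a * νa a y) / (ρ a * νa a x + ρ a * νa a y) := by
          exact Finset.sum_congr rfl fun a _ => h_smul _ _ _ (hρ0 a)
      _ ≤ _ := h_sum _ _ _ (fun a _ => mul_nonneg (hρ0 a) (hνa0 a x))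
          (fun a _ => mul_nonneg (hρ0 a) (hνa0 a y))
  refine ⟨?_, fun x y _ => key x y⟩
  have hF : ∀ x y : Fin n → S, 0 ≤ (f x - f y) * (dΦ (f x) - dΦ (f y)) := by
    intro x y
    rcases le_total (f x) (f y) with h | h
    · have h2 := hdΦmono h
      nlinarith
    · have h2 := hdΦmono h
      nlinarith
  calc ∑ a, ρ a * pairDirichlet (νa a) f (fun x => dΦ (f x))
      = (n:ℝ)⁻¹ * ∑ a, ∑ x, ∑ y, ρ a *
          (if ({j | x j ≠ y j} : Finset (Fin n)).card = 1 then
            νa a x * νa a y / (νa a x + νa a y)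
              * ((f x - f y) * (dΦ (f x) - dΦ (f y)))
          else 0) := by
        rw [Finset.mul_sum]
        refine Finset.sum_congr rfl fun a _ => ?_
        rw [pairDirichlet, mul_left_comm]
        congr 1
        rw [Finset.mul_sum]
        exact Finset.sum_congr rfl fun x _ => Finset.mul_sum _ _ _
    _ = (n:ℝ)⁻¹ * ∑ x, ∑ y, ∑ a, ρ a *
          (if ({j | x j ≠ y j} : Finset (Fin n)).card = 1 then
            νa a x * νa a y / (νa a x + νa a y)
              * ((f x - f y) * (dΦ (f x) - dΦ (f y)))
          else 0) := by
        rw [Finset.sum_comm]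
        exact congrArg _ (Finset.sum_congr rfl fun x _ => Finset.sum_comm)
    _ ≤ pairDirichlet (fun x => ∑ a, ρ a * νa a x) f (fun x => dΦ (f x)) := by
        rw [pairDirichlet]
        refine mul_le_mul_of_nonneg_left ?_ (by positivity)
        refine Finset.sum_le_sum fun x _ => Finset.sum_le_sum fun y _ => ?_
        by_cases hc : ({j | x j ≠ y j} : Finset (Fin n)).card = 1
        · simp only [if_pos hc]
          calc ∑ a, ρ a * (νa a x * νa a y / (νa a x + νa a y)
                * ((f x - f y) * (dΦ (f x) - dΦ (f y))))
              = (∑ a, ρ a * (νa a x * νa a y / (νa a x + νa a y)))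
                  * ((f x - f y) * (dΦ (f x) - dΦ (f y))) := by
                rw [Finset.sum_mul]
                exact Finset.sum_congr rfl fun a _ => by ring
            _ ≤ _ := mul_le_mul_of_nonneg_right (key x y) (hF x y)
        · simp [if_neg hc]
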